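/- Let V be a module over a commutative ring R and let B₁, B₂ : V × V → V be alternating R-bilinear maps, each satisfying the Jacobi identity, and such that B₂ + λB₁ satisfies the Jacobi identity for every scalar λ ∈ R. Call z ∈ V a Casimir of B₁ if B₁(z, x) = 0 for all x ∈ V. Then for any two Casimirs z₁, z₂ of B₁, the element B₂(z₁, z₂) is again a Casimir of B₁; consequently the set of Casimirs of B₁ is a Lie subalgebra of V with respect to the bracket B₂. -/
import Mathlib


/-- The Jacobi identity for a bilinear bracket `B` on a module `V`. -/
def JacobiIdentity {R V : Type*} [CommRing R] [AddCommGroup V] [Module R V]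
    (B : V →ₗ[R] V →ₗ[R] V) : Prop :=
  ∀ x y z : V, B (B x y) z + B (B y z) x + B (B z x) y = 0

/-- `z` is a Casimir of the bracket `B` if `B z x = 0` for all `x`. -/
def IsCasimir {R V : Type*} [CommRing R] [AddCommGroup V] [Module R V]
    (B : V →ₗ[R] V →ₗ[R] V) (z : V) : Prop :=
  ∀ x : V, B z x = 0

/-- For a compatible (bi-Hamiltonian) pair of alternating brackets `B₁, B₂`, the bracket `B₂`
of two Casimirs of `B₁` is again a Casimir of `B₁`; hence the set of Casimirs of `B₁` is a
Lie subalgebra with respect to `B₂`. -/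
theorem casimirs_closed_under_second_bracket {R V : Type*} [CommRing R] [AddCommGroup V]
    [Module R V] (B₁ B₂ : V →ₗ[R] V →ₗ[R] V)
    (hB₁alt : ∀ x : V, B₁ x x = 0) (hB₂alt : ∀ x : V, B₂ x x = 0)
    (hB₁ : JacobiIdentity B₁) (hB₂ : JacobiIdentity B₂)
    (hpencil : ∀ lam : R, JacobiIdentity (B₂ + lam • B₁)) :
    ∀ z₁ z₂ : V, IsCasimir B₁ z₁ → IsCasimir B₁ z₂ → IsCasimir B₁ (B₂ z₁ z₂) := by
  intro z₁ z₂ h₁ h₂ x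
  have skew : ∀ a b : V, B₁ a b = -B₁ b a := by
    intro a b
    have h := hB₁alt (a + b)
    simp only [map_add, LinearMap.add_apply, hB₁alt] at h
    have h' : B₁ a b + B₁ b a = 0 := by
      rw [← h]; abel
    exact eq_neg_of_add_eq_zero_left h'
  have hz₁' : ∀ a : V, B₁ a z₁ = 0 := fun a => by rw [skew, h₁, neg_zero]
  have hz₂' : ∀ a : V, B₁ a z₂ = 0 := fun a => by rw [skew, h₂, neg_zero]
  have hc₁ : ∀ a : V, B₁ z₁ a = 0 := h₁
  have hc₂ : ∀ a : V, B₁ z₂ a = 0 := h₂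
  have hmix := hpencil 1 z₁ z₂ x
  simp only [LinearMap.add_apply, LinearMap.smul_apply, one_smul, map_add,
    hc₁, hc₂, hz₁', hz₂', add_zero, zero_add, map_zero] at hmix
  have h2 := hB₂ z₁ z₂ x
  have h4 : B₁ (B₂ z₁ z₂) x +
      (B₂ (B₂ z₁ z₂) x + B₂ (B₂ z₂ x) z₁ + B₂ (B₂ x z₁) z₂) = 0 := by
    rw [← hmix]; abel
  rw [h2, add_zero] at h4
  exact h4
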